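/- There exist constants C > 0 and c > 0 such that F_b(r) ≤ C·exp(−c·r²) for all r ≥ 1; that is, the Green kernel of the Landau Hamiltonian decays as a Gaussian as |x−y| → ∞. -/

import Mathlib

open MeasureTheory

/-- The radial profile of the (modulus of the) integral kernel of the resolvent of the
Landau Hamiltonian with magnetic field `b`:
`F_b(r) = ∫₀^∞ (b/(4π sinh(bs))) exp(−b r²/(4 tanh(bs))) ds`. -/
noncomputable def Fb (b r : ℝ) : ℝ :=
  ∫ s in Set.Ioi (0 : ℝ),
    b / (4 * Real.pi * Real.sinh (b * s)) * Real.exp (-(b * r ^ 2) / (4 * Real.tanh (b * s)))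

/-- `exp (-x) ≤ 1 / (e x)` for `x > 0`. -/
lemma exp_neg_le_inv_mul {x : ℝ} (hx : 0 < x) :
    Real.exp (-x) ≤ 1 / (Real.exp 1 * x) := by
  have h : Real.exp 1 * x ≤ Real.exp x := by
    have h2 := Real.add_one_le_exp (x - 1)
    have h3 : Real.exp x = Real.exp 1 * Real.exp (x - 1) := by
      rw [← Real.exp_add]; ring_nf
    nlinarith [Real.exp_pos (1 : ℝ)]
  rw [Real.exp_neg, ← one_div]
  exact one_div_le_one_div_of_le (by positivity) h

/-- The pointwise domination used in the Gaussian decay estimate. -/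
lemma Fb_pointwise (b : ℝ) (hb : 0 < b) {r s : ℝ} (hr : 1 ≤ r) (hs : 0 < s) :
    b / (4 * Real.pi * Real.sinh (b * s)) * Real.exp (-(b * r ^ 2) / (4 * Real.tanh (b * s)))
      ≤ Real.exp (-(b / 8) * r ^ 2) * ((4 / (Real.pi * Real.exp 1)) * Real.exp (-(b * s))) := by
  set t := b * s with ht
  have htp : 0 < t := mul_pos hb hs
  have hS : 0 < Real.sinh t := Real.sinh_pos_iff.mpr htp
  have hC : 0 < Real.cosh t := Real.cosh_pos t
  have hT : 0 < Real.tanh t := by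
    rw [Real.tanh_eq_sinh_div_cosh]; positivity
  have hT1 : Real.tanh t ≤ 1 := by
    rw [Real.tanh_eq_sinh_div_cosh, div_le_one hC]
    nlinarith [Real.cosh_sub_sinh t, Real.exp_pos (-t)]
  have hr2 : (1 : ℝ) ≤ r ^ 2 := one_le_pow₀ hr
  have hπ : 0 < Real.pi := Real.pi_pos
  have he : 0 < Real.exp 1 := Real.exp_pos 1
  -- split the exponential
  have hsplit : Real.exp (-(b * r ^ 2) / (4 * Real.tanh t))
      = Real.exp (-(b * r ^ 2) / (8 * Real.tanh t)) *
        Real.exp (-(b * r ^ 2) / (8 * Real.tanh t)) := by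
    rw [← Real.exp_add]; congr 1; field_simp; ring
  -- first factor : Gaussian decay
  have h1 : Real.exp (-(b * r ^ 2) / (8 * Real.tanh t)) ≤ Real.exp (-(b / 8) * r ^ 2) := by
    apply Real.exp_le_exp.mpr
    rw [neg_div, neg_mul, neg_le_neg_iff, le_div_iff₀ (by positivity)]
    nlinarith [mul_nonneg (mul_nonneg hb.le (by positivity : (0:ℝ) ≤ r ^ 2))
      (sub_nonneg.mpr hT1)]
  -- second factor : kills the singularity of `1 / sinh`
  have h2 : Real.exp (-(b * r ^ 2) / (8 * Real.tanh t)) ≤ 8 * Real.tanh t / (b * Real.exp 1) := by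
    have step1 : Real.exp (-(b * r ^ 2) / (8 * Real.tanh t))
        ≤ Real.exp (-(b / (8 * Real.tanh t))) := by
      apply Real.exp_le_exp.mpr
      rw [neg_div, neg_le_neg_iff, div_le_div_iff₀ (by positivity) (by positivity)]
      nlinarith [mul_nonneg (mul_nonneg (sub_nonneg.mpr hr2) hb.le) hT.le]
    have step2 := exp_neg_le_inv_mul (x := b / (8 * Real.tanh t)) (by positivity)
    refine step1.trans (step2.trans_eq ?_)
    field_simp
  -- combine
  have hb4S : 0 < b / (4 * Real.pi * Real.sinh t) := by positivity
  calc b / (4 * Real.pi * Real.sinh t) * Real.exp (-(b * r ^ 2) / (4 * Real.tanh t))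
      = b / (4 * Real.pi * Real.sinh t) *
        (Real.exp (-(b * r ^ 2) / (8 * Real.tanh t)) *
         Real.exp (-(b * r ^ 2) / (8 * Real.tanh t))) := by rw [hsplit]
    _ ≤ b / (4 * Real.pi * Real.sinh t) *
        (Real.exp (-(b / 8) * r ^ 2) * (8 * Real.tanh t / (b * Real.exp 1))) := by
        apply mul_le_mul_of_nonneg_left _ hb4S.le
        exact mul_le_mul h1 h2 (Real.exp_pos _).le (Real.exp_pos _).le
    _ = Real.exp (-(b / 8) * r ^ 2) * (2 / (Real.pi * Real.exp 1) * (1 / Real.cosh t)) := by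
        rw [Real.tanh_eq_sinh_div_cosh]
        field_simp
        ring
    _ ≤ Real.exp (-(b / 8) * r ^ 2) * ((4 / (Real.pi * Real.exp 1)) * Real.exp (-t)) := by
        apply mul_le_mul_of_nonneg_left _ (Real.exp_pos _).le
        have hcosh : Real.exp t / 2 ≤ Real.cosh t := by
          rw [Real.cosh_eq]
          nlinarith [Real.exp_pos (-t)]
        have hinv : Real.exp (-t) * Real.exp t = 1 := by
          rw [← Real.exp_add]; simp
        have h1c : 1 / Real.cosh t ≤ 2 * Real.exp (-t) := by
          rw [div_le_iff₀ hC]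
          nlinarith [Real.exp_pos (-t)]
        calc 2 / (Real.pi * Real.exp 1) * (1 / Real.cosh t)
            ≤ 2 / (Real.pi * Real.exp 1) * (2 * Real.exp (-t)) := by
              apply mul_le_mul_of_nonneg_left h1c (by positivity)
          _ = 4 / (Real.pi * Real.exp 1) * Real.exp (-t) := by ring

/-- Gaussian decay of the Green kernel of the Landau Hamiltonian away from the diagonal:
there are constants `C > 0` and `c > 0` with `F_b(r) ≤ C exp(−c r²)` for all `r ≥ 1`. -/
theorem Fb_gaussian_decay (b : ℝ) (hb : 0 < b) :
    ∃ C > (0 : ℝ), ∃ c > (0 : ℝ),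
      ∀ r : ℝ, 1 ≤ r → Fb b r ≤ C * Real.exp (-c * r ^ 2) := by
  have hπ : 0 < Real.pi := Real.pi_pos
  have he : 0 < Real.exp 1 := Real.exp_pos 1
  refine ⟨4 / (Real.pi * Real.exp 1) / b, by positivity, b / 8, by positivity, fun r hr => ?_⟩
  have hI : IntegrableOn (fun s : ℝ => Real.exp (-(b * s))) (Set.Ioi 0) := by
    simpa [neg_mul] using exp_neg_integrableOn_Ioi 0 hb
  have hIval : (∫ s in Set.Ioi (0 : ℝ), Real.exp (-(b * s))) = 1 / b := by
    have h := integral_comp_mul_left_Ioi (fun x => Real.exp (-x)) 0 hb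
    simp only [mul_zero] at h
    rw [h, integral_exp_neg_Ioi_zero, smul_eq_mul, mul_one, one_div]
  have hmono : Fb b r ≤ ∫ s in Set.Ioi (0 : ℝ),
      Real.exp (-(b / 8) * r ^ 2) * ((4 / (Real.pi * Real.exp 1)) * Real.exp (-(b * s))) := by
    refine integral_mono_of_nonneg ?_ (((hI.const_mul _).const_mul _)) ?_
    · filter_upwards [ae_restrict_mem measurableSet_Ioi] with s hs
      have hS : 0 < Real.sinh (b * s) := Real.sinh_pos_iff.mpr (mul_pos hb hs)
      positivity
    · filter_upwards [ae_restrict_mem measurableSet_Ioi] with s hs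
      exact Fb_pointwise b hb hr hs
  refine hmono.trans_eq ?_
  rw [integral_const_mul, integral_const_mul, hIval]
  ring_nf
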